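/- arXiv:2205.14223 — 2 statements merged into one kernel-verified Lean document; each statement's English description precedes it below -/
import Mathlib

section
/- Let k ≥ 2, let F ∈ Q_1([0,1]^2)^2 with Jacobian J, and let q ∈ Q_{k-1}([0,1]^2). Then each component of cof(J(x)) ∇q(x) is a polynomial in Q_{k-1}([0,1]^2), i.e. of degree at most k-1 in each variable. -/
open MvPolynomial

/-- `p ∈ Q_m`: polynomial of degree at most `m` in each of the two variables. -/
def memQ2 (m : ℕ) (p : MvPolynomial (Fin 2) ℝ) : Prop :=
  ∀ i : Fin 2, degreeOf i p ≤ m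

/-- The cofactor matrix of the (polynomial) Jacobian of `F : [0,1]² → ℝ²`,
`cof(J) = [[∂₂F₂, -∂₁F₂], [-∂₂F₁, ∂₁F₁]]`. -/
noncomputable def cofJ2 (F : Fin 2 → MvPolynomial (Fin 2) ℝ) :
    Matrix (Fin 2) (Fin 2) (MvPolynomial (Fin 2) ℝ) :=
  !![pderiv 1 (F 1), -pderiv 0 (F 1); -pderiv 1 (F 0), pderiv 0 (F 0)]

lemma degreeOf_pderiv_le_sub {σ : Type*} [DecidableEq σ] {R : Type*} [CommRing R]
    (i j : σ) (p : MvPolynomial σ R) :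
    degreeOf i (pderiv j p) ≤ degreeOf i p - (Finsupp.single j 1 : σ →₀ ℕ) i := by
  have hp : pderiv j p = ∑ s ∈ p.support, monomial (s - Finsupp.single j 1) (coeff s p * s j) := by
    conv_lhs => rw [p.as_sum]
    rw [map_sum]
    simp [pderiv_monomial]
  rw [hp, degreeOf_le_iff]
  intro m hm
  obtain ⟨s, hs, hm⟩ := Finset.mem_biUnion.mp (support_sum hm)
  have hms : m = s - Finsupp.single j 1 := by
    have := support_monomial_subset hm
    simpa using this
  subst hms
  have hsi : s i ≤ degreeOf i p := degreeOf_le_iff.mp le_rfl s hs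
  rw [Finsupp.tsub_apply]
  exact Nat.sub_le_sub_right hsi _

lemma degreeOf_pderiv_self_le {σ : Type*} [DecidableEq σ] {R : Type*} [CommRing R]
    (i : σ) (p : MvPolynomial σ R) :
    degreeOf i (pderiv i p) ≤ degreeOf i p - 1 := by
  simpa using degreeOf_pderiv_le_sub i i p

lemma degreeOf_pderiv_ne_le {σ : Type*} [DecidableEq σ] {R : Type*} [CommRing R]
    {i j : σ} (h : i ≠ j) (p : MvPolynomial σ R) :
    degreeOf i (pderiv j p) ≤ degreeOf i p := by
  simpa [Finsupp.single_apply, (Ne.symm h : j ≠ i)] using degreeOf_pderiv_le_sub i j p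

lemma degreeOf_neg_eq {σ : Type*} {R : Type*} [CommRing R]
    (i : σ) (p : MvPolynomial σ R) : degreeOf i (-p) = degreeOf i p := by
  classical
  simp only [degreeOf_eq_sup]
  congr 1
  exact MvPolynomial.support_neg (p := p)

/-- The key bound for one term of the sum. -/
lemma term_bound (k : ℕ) (hk : 2 ≤ k) {m a j : Fin 2} (haj : a ≠ j)
    (G q : MvPolynomial (Fin 2) ℝ) (hG : ∀ l, degreeOf l G ≤ 1)
    (hq : ∀ l, degreeOf l q ≤ k - 1) :
    degreeOf m (pderiv a G * pderiv j q) ≤ k - 1 := by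
  refine le_trans (degreeOf_mul_le m _ _) ?_
  by_cases hma : m = a
  · subst hma
    have h1 : degreeOf m (pderiv m G) ≤ 1 - 1 :=
      le_trans (degreeOf_pderiv_self_le m G) (Nat.sub_le_sub_right (hG m) 1)
    have h2 : degreeOf m (pderiv j q) ≤ k - 1 :=
      le_trans (degreeOf_pderiv_ne_le haj q) (hq m)
    omega
  · have hmj : m = j := by fin_cases m <;> fin_cases a <;> fin_cases j <;> simp_all
    subst hmj
    have h1 : degreeOf m (pderiv a G) ≤ 1 :=
      le_trans (degreeOf_pderiv_ne_le hma G) (hG m)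
    have h2 : degreeOf m (pderiv m q) ≤ (k - 1) - 1 :=
      le_trans (degreeOf_pderiv_self_le m q) (Nat.sub_le_sub_right (hq m) 1)
    omega

theorem stmt_5 (k : ℕ) (hk : 2 ≤ k)
    (F : Fin 2 → MvPolynomial (Fin 2) ℝ)
    (hF : ∀ i j : Fin 2, degreeOf j (F i) ≤ 1)
    (q : MvPolynomial (Fin 2) ℝ) (hq : memQ2 (k - 1) q) :
    ∀ i : Fin 2, memQ2 (k - 1) (∑ j : Fin 2, cofJ2 F i j * pderiv j q) := by
  have h10 : (1 : Fin 2) ≠ 0 := by decide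
  have h01 : (0 : Fin 2) ≠ 1 := by decide
  intro i m
  rw [Fin.sum_univ_two]
  refine le_trans (degreeOf_add_le m _ _) (max_le ?_ ?_)
  · fin_cases i
    · show degreeOf m (pderiv 1 (F 1) * pderiv 0 q) ≤ k - 1
      exact term_bound k hk h10 _ q (hF 1) hq
    · show degreeOf m (-pderiv 1 (F 0) * pderiv 0 q) ≤ k - 1
      rw [neg_mul, degreeOf_neg_eq]
      exact term_bound k hk h10 _ q (hF 0) hq
  · fin_cases i
    · show degreeOf m (-pderiv 0 (F 1) * pderiv 1 q) ≤ k - 1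
      rw [neg_mul, degreeOf_neg_eq]
      exact term_bound k hk h01 _ q (hF 1) hq
    · show degreeOf m (pderiv 0 (F 0) * pderiv 1 q) ≤ k - 1
      exact term_bound k hk h01 _ q (hF 0) hq
end

section
/- Let k ≥ 2, let F ∈ Q_1([0,1]^3)^3 with Jacobian J, and let q ∈ Q_{k-1}([0,1]^3). Then each component of cof(J(x)) ∇q(x) is a polynomial in Q_k([0,1]^3), i.e. of degree at most k in each of the three variables. -/
open MvPolynomial Matrix

/-- `p ∈ Q_m`: polynomial of degree at most `m` in each of the three variables. -/
def memQ3 (m : ℕ) (p : MvPolynomial (Fin 3) ℝ) : Prop :=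
  ∀ i : Fin 3, degreeOf i p ≤ m

/-- `cof(J)∇q = ∂₁q (∂₂F × ∂₃F) + ∂₂q (∂₃F × ∂₁F) + ∂₃q (∂₁F × ∂₂F)`. -/
noncomputable def cofGrad3 (F : Fin 3 → MvPolynomial (Fin 3) ℝ)
    (q : MvPolynomial (Fin 3) ℝ) : Fin 3 → MvPolynomial (Fin 3) ℝ :=
  pderiv 0 q • ((fun i => pderiv 1 (F i)) ⨯₃ (fun i => pderiv 2 (F i))) +
  pderiv 1 q • ((fun i => pderiv 2 (F i)) ⨯₃ (fun i => pderiv 0 (F i))) +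
  pderiv 2 q • ((fun i => pderiv 0 (F i)) ⨯₃ (fun i => pderiv 1 (F i)))

lemma degreeOf_pderiv_le' {σ R : Type*} [CommSemiring R] [DecidableEq σ] (a j : σ)
    (p : MvPolynomial σ R) {n : ℕ} (h : degreeOf j p ≤ n) :
    degreeOf j (pderiv a p) ≤ n - (if j = a then 1 else 0) := by
  rw [degreeOf_le_iff]
  intro m hm
  have hrew : pderiv a p = ∑ s ∈ p.support, monomial (s - Finsupp.single a 1) (coeff s p * s a) := by
    conv_lhs => rw [p.as_sum]
    rw [map_sum]
    simp
  rw [hrew] at hm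
  obtain ⟨s, hs, hms⟩ := Finset.mem_biUnion.mp (MvPolynomial.support_sum hm)
  have hsj : s j ≤ n := degreeOf_le_iff.mp h s hs
  have hme : m = s - Finsupp.single a 1 := by
    have := MvPolynomial.support_monomial_subset hms
    simpa using this
  subst hme
  rw [Finsupp.tsub_apply, Finsupp.single_apply]
  rcases eq_or_ne j a with rfl | hne
  · simp only [if_pos rfl]
    omega
  · simp only [if_neg hne, if_neg (Ne.symm hne)]
    omega

lemma term_bound_s6 (k : ℕ) (hk : 2 ≤ k) (q : MvPolynomial (Fin 3) ℝ) (hq : memQ3 (k - 1) q)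
    (p1 p2 : MvPolynomial (Fin 3) ℝ)
    (hp1 : ∀ j : Fin 3, degreeOf j p1 ≤ 1) (hp2 : ∀ j : Fin 3, degreeOf j p2 ≤ 1)
    (a b c : Fin 3) (hab : a ≠ b) (hbc : b ≠ c) (hac : a ≠ c) (j : Fin 3) :
    degreeOf j (pderiv a q * (pderiv b p1 * pderiv c p2)) ≤ k := by
  have h1 := degreeOf_pderiv_le' a j q (hq j)
  have h2 := degreeOf_pderiv_le' b j p1 (hp1 j)
  have h3 := degreeOf_pderiv_le' c j p2 (hp2 j)
  refine le_trans (degreeOf_mul_le _ _ _) ?_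
  refine le_trans (add_le_add h1 (le_trans (degreeOf_mul_le _ _ _) (add_le_add h2 h3))) ?_
  have hj : j = a ∨ j = b ∨ j = c := by fin_cases a <;> fin_cases b <;> fin_cases c <;>
    fin_cases j <;> simp_all
  rcases hj with rfl | rfl | rfl
  · rw [if_pos rfl, if_neg hab, if_neg hac]; omega
  · rw [if_neg (Ne.symm hab), if_pos rfl, if_neg hbc]; omega
  · rw [if_neg (Ne.symm hac), if_neg (Ne.symm hbc), if_pos rfl]; omega

theorem stmt_6 (k : ℕ) (hk : 2 ≤ k)
    (F : Fin 3 → MvPolynomial (Fin 3) ℝ)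
    (hF : ∀ i j : Fin 3, degreeOf j (F i) ≤ 1)
    (q : MvPolynomial (Fin 3) ℝ) (hq : memQ3 (k - 1) q) :
    ∀ i : Fin 3, memQ3 k (cofGrad3 F q i) := by
  intro i j
  have key : ∀ (a b c i1 i2 : Fin 3), a ≠ b → b ≠ c → a ≠ c →
      degreeOf j (pderiv a q * (pderiv b (F i1) * pderiv c (F i2))) ≤ k :=
    fun a b c i1 i2 hab hbc hac =>
      term_bound_s6 k hk q hq (F i1) (F i2) (hF i1) (hF i2) a b c hab hbc hac j
  have hsub : ∀ (a b c i1 i2 : Fin 3), a ≠ b → b ≠ c → a ≠ c →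
      degreeOf j (pderiv a q * (pderiv b (F i1) * pderiv c (F i2) -
        pderiv b (F i2) * pderiv c (F i1))) ≤ k := by
    intro a b c i1 i2 hab hbc hac
    rw [mul_sub]
    exact le_trans (degreeOf_sub_le _ _ _) (max_le (key a b c i1 i2 hab hbc hac)
      (key a b c i2 i1 hab hbc hac))
  have habc : ∀ X Y Z : MvPolynomial (Fin 3) ℝ, degreeOf j X ≤ k → degreeOf j Y ≤ k →
      degreeOf j Z ≤ k → degreeOf j (X + Y + Z) ≤ k := by
    intro X Y Z hX hY hZ
    exact le_trans (degreeOf_add_le _ _ _)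
      (max_le (le_trans (degreeOf_add_le _ _ _) (max_le hX hY)) hZ)
  fin_cases i <;>
    simp only [cofGrad3, crossProduct, Pi.add_apply, Pi.smul_apply, smul_eq_mul,
      cons_val_zero, cons_val_one, head_cons, cons_val_two, tail_cons, Matrix.cons_val',
      Matrix.empty_val', Matrix.cons_val_fin_one, of_apply] <;>
  · apply habc <;> apply hsub <;> decide
end
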